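/- Let f : ℝⁿ → ℝ be differentiable, Q ∈ ℝ^{n×p}, x ∈ ℝⁿ, δ > 0, and let m̂(s) = c + ĝᵀ s + (1/2) sᵀ Ĥ s be a quadratic model with symmetric Ĥ satisfying ‖Ĥ‖ ≤ κ_h for some κ_h ≥ 1. Suppose m̂ is a (κ_ef, κ_eg; Q)-fully linear model of f in B(x, δ; Q), the trial step s_k with ‖s_k‖ ≤ δ satisfies m̂(0) − m̂(s_k) ≥ (κ_fcd/2) ‖ĝ‖ min{δ, ‖ĝ‖/max(‖Ĥ‖, 1)} for some κ_fcd ∈ (0,1], and the estimates f⁰, fˢ are ε_f-accurate for f(x) and f(x + Q s_k) with radius δ, where 0 < ε_f ≤ κ_ef. Let η₁ ∈ (0,1) and η₂ > 0. If δ ≤ min{ 1/κ_h, 1/η₂, κ_fcd(1 − η₁)/(8 κ_ef) } ‖ĝ‖, then the iteration is successful, i.e., ρ := (f⁰ − fˢ)/(m̂(0) − m̂(s_k)) ≥ η₁ and ‖ĝ‖ ≥ η₂ δ. -/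
import Mathlib


open MeasureTheory Matrix
open scoped RealInnerProductSpace

/-- The operator norm of a real matrix with respect to Euclidean norms
(a norm consistent with the Euclidean norm). -/
noncomputable def matOpNorm {n p : ℕ} (Q : Matrix (Fin n) (Fin p) ℝ) : ℝ :=
  ‖LinearMap.toContinuousLinearMap (Matrix.toEuclideanLin Q)‖

/-- **Lemma 4.5.** If the model is `(κ_ef, κ_eg; Q)`-fully linear, the estimates are
`ε_f`-accurate with `ε_f ≤ κ_ef`, and `δ ≤ min{1/κ_h, 1/η₂, κ_fcd (1 - η₁)/(8 κ_ef)} ‖ĝ‖`,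
then the iteration is successful. -/
theorem stmt_10 {n p : ℕ} (f : EuclideanSpace ℝ (Fin n) → ℝ) (hf : Differentiable ℝ f)
    (Q : Matrix (Fin n) (Fin p) ℝ) (x : EuclideanSpace ℝ (Fin n))
    (δ : ℝ) (hδ : 0 < δ)
    -- the quadratic model m̂(s) = c + ĝᵀ s + (1/2) sᵀ Ĥ s
    (c : ℝ) (g : EuclideanSpace ℝ (Fin p)) (H : Matrix (Fin p) (Fin p) ℝ)
    (hHsymm : H.IsSymm) (κh : ℝ) (hκh : 1 ≤ κh) (hH : matOpNorm H ≤ κh)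
    (mhat : EuclideanSpace ℝ (Fin p) → ℝ)
    (hmhat : ∀ t, mhat t = c + ⟪g, t⟫ + 1 / 2 * ⟪t, Matrix.toEuclideanLin H t⟫)
    -- (κ_ef, κ_eg; Q)-full linearity of the model in B(x, δ; Q)
    (κef κeg : ℝ) (hκef : 0 < κef) (hκeg : 0 < κeg)
    (hfl : ∀ t : EuclideanSpace ℝ (Fin p), ‖t‖ ≤ δ →
      |f (x + Matrix.toEuclideanLin Q t) - mhat t| ≤ κef * δ ^ 2 ∧
      ‖Matrix.toEuclideanLin Qᵀ (gradient f (x + Matrix.toEuclideanLin Q t))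
          - (g + Matrix.toEuclideanLin H t)‖ ≤ κeg * δ)
    -- the trial step with the fraction-of-Cauchy-decrease property
    (sk : EuclideanSpace ℝ (Fin p)) (hsk : ‖sk‖ ≤ δ)
    (κfcd : ℝ) (hκfcd : κfcd ∈ Set.Ioc (0:ℝ) 1)
    (hcauchy : mhat 0 - mhat sk
      ≥ κfcd / 2 * ‖g‖ * min δ (‖g‖ / max (matOpNorm H) 1))
    -- ε_f-accurate estimates of f(x) and f(x + Q s_k)
    (εf : ℝ) (hεf0 : 0 < εf) (hεf : εf ≤ κef) (f0 fs : ℝ)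
    (hf0 : |f0 - f x| ≤ εf * δ ^ 2)
    (hfs : |fs - f (x + Matrix.toEuclideanLin Q sk)| ≤ εf * δ ^ 2)
    (η₁ η₂ : ℝ) (hη₁ : η₁ ∈ Set.Ioo (0:ℝ) 1) (hη₂ : 0 < η₂)
    (hδsmall : δ ≤ min (min (1 / κh) (1 / η₂)) (κfcd * (1 - η₁) / (8 * κef)) * ‖g‖) :
    (f0 - fs) / (mhat 0 - mhat sk) ≥ η₁ ∧ ‖g‖ ≥ η₂ * δ := by
  obtain ⟨hfcd0, hfcd1⟩ := hκfcd
  obtain ⟨hη₁0, hη₁1⟩ := hη₁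
  have hκh0 : (0:ℝ) < κh := lt_of_lt_of_le one_pos hκh
  have hA1 : min (min (1 / κh) (1 / η₂)) (κfcd * (1 - η₁) / (8 * κef))
      ≤ 1 / κh := le_trans (min_le_left _ _) (min_le_left _ _)
  have hA2 : min (min (1 / κh) (1 / η₂)) (κfcd * (1 - η₁) / (8 * κef))
      ≤ 1 / η₂ := le_trans (min_le_left _ _) (min_le_right _ _)
  have hA3 : min (min (1 / κh) (1 / η₂)) (κfcd * (1 - η₁) / (8 * κef))
      ≤ κfcd * (1 - η₁) / (8 * κef) := min_le_right _ _
  have hg0 : (0:ℝ) ≤ ‖g‖ := norm_nonneg _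
  -- δ ≤ (1/κh) ‖g‖, δ ≤ (1/η₂) ‖g‖, δ ≤ κfcd(1-η₁)/(8κef) ‖g‖
  have hd1 : δ ≤ 1 / κh * ‖g‖ :=
    le_trans hδsmall (mul_le_mul_of_nonneg_right hA1 hg0)
  have hd2 : δ ≤ 1 / η₂ * ‖g‖ :=
    le_trans hδsmall (mul_le_mul_of_nonneg_right hA2 hg0)
  have hd3 : δ ≤ κfcd * (1 - η₁) / (8 * κef) * ‖g‖ :=
    le_trans hδsmall (mul_le_mul_of_nonneg_right hA3 hg0)
  have hgη : ‖g‖ ≥ η₂ * δ := by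
    rw [div_mul_eq_mul_div, le_div_iff₀ hη₂] at hd2
    linarith [mul_comm δ η₂]
  refine ⟨?_, hgη⟩
  -- min δ (‖g‖ / max ‖H‖ 1) = δ
  have hmax1 : (1:ℝ) ≤ max (matOpNorm H) 1 := le_max_right _ _
  have hmaxκ : max (matOpNorm H) 1 ≤ κh := max_le hH hκh
  have hδg : δ ≤ ‖g‖ / max (matOpNorm H) 1 := by
    calc δ ≤ 1 / κh * ‖g‖ := hd1
    _ = ‖g‖ / κh := by ring
    _ ≤ ‖g‖ / max (matOpNorm H) 1 :=
        div_le_div_of_nonneg_left hg0 (lt_of_lt_of_le one_pos hmax1) hmaxκ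
  have hminδ : min δ (‖g‖ / max (matOpNorm H) 1) = δ := min_eq_left hδg
  rw [hminδ] at hcauchy
  have hκhg : κh * δ ≤ ‖g‖ := by
    rw [div_mul_eq_mul_div, le_div_iff₀ hκh0] at hd1
    linarith [mul_comm δ κh]
  have hgpos : (0:ℝ) < ‖g‖ := lt_of_lt_of_le (mul_pos hκh0 hδ) hκhg
  have hDpos : 0 < mhat 0 - mhat sk :=
    lt_of_lt_of_le (by positivity) hcauchy
  -- error estimates
  have h0 : ‖(0 : EuclideanSpace ℝ (Fin p))‖ ≤ δ := by simp [hδ.le]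
  have e0 := (hfl 0 h0).1
  simp only [map_zero, add_zero] at e0
  have es := (hfl sk hsk).1
  obtain ⟨e0l, e0r⟩ := abs_le.1 e0
  obtain ⟨esl, esr⟩ := abs_le.1 es
  obtain ⟨f0l, f0r⟩ := abs_le.1 hf0
  obtain ⟨fsl, fsr⟩ := abs_le.1 hfs
  have hnum : f0 - fs ≥ (mhat 0 - mhat sk) - 4 * κef * δ ^ 2 := by linarith [mul_le_mul_of_nonneg_right hεf (sq_nonneg δ)]
  rw [ge_iff_le, le_div_iff₀ hDpos]
  -- δ ≤ κfcd(1-η₁)/(8κef) ‖g‖ means 8 κef δ ≤ κfcd (1-η₁) ‖g‖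
  have hkey : 8 * κef * δ ≤ κfcd * (1 - η₁) * ‖g‖ := by
    rw [div_mul_eq_mul_div, le_div_iff₀ (by positivity)] at hd3
    linarith [mul_comm δ (8 * κef)]
  have h1 : 4 * κef * δ ^ 2 ≤ (1 - η₁) * (κfcd / 2 * ‖g‖ * δ) := by
    linarith [mul_le_mul_of_nonneg_right hkey hδ.le]
  have h2 : (1 - η₁) * (κfcd / 2 * ‖g‖ * δ) ≤ (1 - η₁) * (mhat 0 - mhat sk) :=
    mul_le_mul_of_nonneg_left hcauchy (by linarith)
  linarith
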